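/- Let Γ be a finite connected simple graph of genus g = |E(Γ)| − |V(Γ)| + 1, and let f be an automorphism of Γ acting without inversions (no edge is mapped to itself with its endpoints exchanged) and inducing the identity on H₁(Γ;ℚ). Then the fixed-point subgraph Fix(f) of f satisfies χ(Fix(f)) = 1 − g = χ(Γ). -/

import Mathlib

open Finset

variable {V : Type*} [Fintype V] [DecidableEq V]

/-- The group `C₁(Γ;R)` of simplicial 1-chains of a simple graph, modeled as
antisymmetric functions on ordered pairs of vertices, supported on adjacent pairs. -/
def chainSpace (R : Type*) [CommRing R] (G : SimpleGraph V) : Submodule R (V → V → R) where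
  carrier := {f | (∀ u v, f u v = - f v u) ∧ ∀ u v, ¬ G.Adj u v → f u v = 0}
  add_mem' := by
    rintro f g ⟨hf1, hf2⟩ ⟨hg1, hg2⟩
    refine ⟨fun u v => ?_, fun u v h => ?_⟩
    · simp only [Pi.add_apply, hf1 u v, hg1 u v]; ring
    · simp [Pi.add_apply, hf2 u v h, hg2 u v h]
  zero_mem' := ⟨fun u v => by simp, fun u v _ => rfl⟩
  smul_mem' := by
    rintro r f ⟨hf1, hf2⟩
    exact ⟨fun u v => by simp [hf1 u v], fun u v h => by simp [hf2 u v h]⟩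

/-- The simplicial boundary map `∂ : C₁(Γ;R) → C₀(Γ;R)`, sending the oriented
edge `(u,v)` to `v - u`. -/
def graphBoundary (R : Type*) [CommRing R] (G : SimpleGraph V) :
    chainSpace R G →ₗ[R] (V → R) where
  toFun c := fun v => ∑ u, c.1 u v
  map_add' c d := by funext v; simp [Finset.sum_add_distrib]
  map_smul' r c := by funext v; simp [Finset.mul_sum]

set_option linter.unusedSectionVars false

-- σ action on vertices / C₀
def vertAct (σ : Equiv.Perm V) : (V → ℚ) →ₗ[ℚ] (V → ℚ) where
  toFun c := fun v => c (σ⁻¹ v)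
  map_add' _ _ := rfl
  map_smul' _ _ := rfl

lemma trace_vertAct (σ : Equiv.Perm V) :
    LinearMap.trace ℚ _ (vertAct σ) =
      ((Finset.univ.filter fun v : V => σ v = v).card : ℚ) := by
  rw [LinearMap.trace_eq_matrix_trace ℚ (Pi.basisFun ℚ V), Matrix.trace]
  have : ∀ v : V, ((LinearMap.toMatrix (Pi.basisFun ℚ V) (Pi.basisFun ℚ V)) (vertAct σ)).diag v
      = if σ v = v then (1:ℚ) else 0 := by
    intro v
    rw [Matrix.diag, LinearMap.toMatrix_apply, Pi.basisFun_repr, Pi.basisFun_apply]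
    show (Pi.single v (1:ℚ) : V → ℚ) (σ⁻¹ v) = _
    rw [Pi.single_apply]
    congr 1
    simp only [eq_iff_iff]
    constructor
    · intro h
      have := congrArg σ h
      simpa using this.symm
    · intro h
      have := congrArg (⇑σ⁻¹) h
      simpa using this.symm
  rw [Finset.sum_congr rfl fun v _ => this v, Finset.sum_boole]

-- σ action on C₁
def chainAct (G : SimpleGraph V) (σ : Equiv.Perm V)
    (hadj : ∀ u v : V, G.Adj u v ↔ G.Adj (σ u) (σ v)) :
    chainSpace ℚ G →ₗ[ℚ] chainSpace ℚ G where
  toFun c := ⟨fun u v => c.1 (σ⁻¹ u) (σ⁻¹ v),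
    ⟨fun u v => c.2.1 _ _, fun u v h => c.2.2 _ _ (fun hA => h (by
      have := (hadj (σ⁻¹ u) (σ⁻¹ v)).mp hA
      simpa using this))⟩⟩
  map_add' _ _ := rfl
  map_smul' _ _ := rfl

-- linear map chainSpace → functions on edges
noncomputable def chainToFun (G : SimpleGraph V) [DecidableRel G.Adj] :
    chainSpace ℚ G →ₗ[ℚ] (↥G.edgeFinset → ℚ) where
  toFun c := fun e => c.1 (Quot.out e.1).1 (Quot.out e.1).2
  map_add' _ _ := rfl
  map_smul' _ _ := rfl

lemma out_mk_cases (u v : V) :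
    Quot.out (s(u,v) : Sym2 V) = (u, v) ∨ Quot.out (s(u,v) : Sym2 V) = (v, u) := by
  rcases hp : Quot.out (s(u,v) : Sym2 V) with ⟨a, b⟩
  have h : (s(a,b) : Sym2 V) = s(u,v) := by
    have h0 := Quot.out_eq (s(u,v) : Sym2 V); rw [hp] at h0; exact h0
  rw [Sym2.eq_iff] at h
  rcases h with ⟨h1, h2⟩ | ⟨h1, h2⟩
  · left; rw [h1, h2]
  · right; rw [h1, h2]

noncomputable def funToChain (G : SimpleGraph V) [DecidableRel G.Adj] :
    (↥G.edgeFinset → ℚ) →ₗ[ℚ] chainSpace ℚ G where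
  toFun x := ⟨fun u v => if h : G.Adj u v then
      (if Quot.out (s(u,v) : Sym2 V) = (u,v) then (1:ℚ) else -1) *
        x ⟨s(u,v), by simpa [SimpleGraph.mem_edgeFinset] using h⟩ else 0, by
    constructor
    · intro u v
      dsimp only
      by_cases h : G.Adj u v
      · have h' : G.Adj v u := h.symm
        have hne : u ≠ v := h.ne
        have hsw : (s(v,u) : Sym2 V) = s(u,v) := Sym2.eq_swap
        have hne2 : ((u,v) : V × V) ≠ (v,u) := fun hc => hne (congrArg Prod.fst hc)
        have hne3 : ((v,u) : V × V) ≠ (u,v) := fun hc => hne (congrArg Prod.fst hc).symm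
        rcases out_mk_cases u v with ho | ho
        · simp [h, h', hsw, ho, hne2]
        · simp [h, h', hsw, ho, hne3]
      · have h' : ¬ G.Adj v u := fun h2 => h h2.symm
        simp [h, h']
    · intro u v h
      dsimp only
      exact dif_neg h⟩
  map_add' x y := by
    apply Subtype.ext; funext u v
    dsimp only
    by_cases h : G.Adj u v
    · simp only [Submodule.coe_add, Pi.add_apply, Submodule.coe_mk]
      rw [dif_pos h, dif_pos h, dif_pos h]
      exact mul_add _ _ _
    · simp [dif_neg h]
  map_smul' r x := by
    apply Subtype.ext; funext u v
    dsimp only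
    by_cases h : G.Adj u v
    · simp only [SetLike.val_smul, Pi.smul_apply, smul_eq_mul, RingHom.id_apply]
      rw [dif_pos h, dif_pos h]
      exact mul_left_comm _ _ _
    · simp [dif_neg h]

lemma adj_of_mem_edgeFinset {G : SimpleGraph V} [DecidableRel G.Adj] {e : Sym2 V}
    (he : e ∈ G.edgeFinset) : G.Adj (Quot.out e).1 (Quot.out e).2 := by
  have h : Sym2.mk (Quot.out e).1 (Quot.out e).2 = e := Quot.out_eq _
  have : e ∈ G.edgeSet := by simpa [SimpleGraph.mem_edgeFinset] using he
  rw [← h] at this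
  exact this

noncomputable def chainEquiv (G : SimpleGraph V) [DecidableRel G.Adj] :
    chainSpace ℚ G ≃ₗ[ℚ] (↥G.edgeFinset → ℚ) := by
  refine LinearEquiv.ofLinear (chainToFun G) (funToChain G) ?_ ?_
  · apply LinearMap.ext; intro x
    funext e
    obtain ⟨es, he⟩ := e
    have hadj : G.Adj (Quot.out es).1 (Quot.out es).2 := adj_of_mem_edgeFinset he
    show (funToChain G x).1 (Quot.out es).1 (Quot.out es).2 = x ⟨es, he⟩
    have hmk : (s((Quot.out es).1, (Quot.out es).2) : Sym2 V) = es := by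
      exact Quot.out_eq _
    show (if h : G.Adj (Quot.out es).1 (Quot.out es).2 then _ else 0) = x ⟨es, he⟩
    rw [dif_pos hadj]
    have hcond : Quot.out (s((Quot.out es).1, (Quot.out es).2) : Sym2 V)
        = ((Quot.out es).1, (Quot.out es).2) := by
      rw [hmk, Prod.mk.eta]
    rw [if_pos hcond, one_mul]
    congr 1
    exact Subtype.ext hmk
  · apply LinearMap.ext; intro c
    apply Subtype.ext; funext u v
    show (if h : G.Adj u v then _ else 0) = c.1 u v
    by_cases h : G.Adj u v
    · rw [dif_pos h]
      have hne : u ≠ v := h.ne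
      rcases out_mk_cases u v with ho | ho
      · rw [if_pos ho]
        show 1 * c.1 (Quot.out (s(u,v) : Sym2 V)).1 (Quot.out (s(u,v) : Sym2 V)).2 = c.1 u v
        rw [ho, one_mul]
      · rw [if_neg (by rw [ho]; exact fun hc => hne (congrArg Prod.fst hc).symm)]
        show (-1) * c.1 (Quot.out (s(u,v) : Sym2 V)).1 (Quot.out (s(u,v) : Sym2 V)).2 = c.1 u v
        rw [ho]
        show (-1) * c.1 v u = c.1 u v
        rw [c.2.1 u v]; ring
    · rw [dif_neg h]
      exact (c.2.2 u v h).symm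

noncomputable def chainBasis (G : SimpleGraph V) [DecidableRel G.Adj] :
    Module.Basis (↥G.edgeFinset) ℚ (chainSpace ℚ G) :=
  Module.Basis.ofEquivFun (chainEquiv G)

lemma finrank_chainSpace (G : SimpleGraph V) [DecidableRel G.Adj] :
    Module.finrank ℚ (chainSpace ℚ G) = G.edgeFinset.card := by
  rw [Module.finrank_eq_card_basis (chainBasis G), Fintype.card_coe]

lemma trace_chainAct (G : SimpleGraph V) [DecidableRel G.Adj] (σ : Equiv.Perm V)
    (hadj : ∀ u v : V, G.Adj u v ↔ G.Adj (σ u) (σ v))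
    (hnoinv : ∀ u v : V, G.Adj u v → ¬ (σ u = v ∧ σ v = u)) :
    LinearMap.trace ℚ _ (chainAct G σ hadj)
      = ((G.edgeFinset.filter fun e => Sym2.map σ e = e).card : ℚ) := by
  rw [LinearMap.trace_eq_matrix_trace ℚ (chainBasis G), Matrix.trace]
  have key : ∀ e : ↥G.edgeFinset,
      (LinearMap.toMatrix (chainBasis G) (chainBasis G) (chainAct G σ hadj)).diag e
        = if Sym2.map σ e.1 = e.1 then (1:ℚ) else 0 := by
    intro e
    rw [Matrix.diag, LinearMap.toMatrix_apply, chainBasis, Module.Basis.ofEquivFun_repr_apply,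
      Module.Basis.coe_ofEquivFun]
    rw [chainEquiv]
    simp only [LinearEquiv.ofLinear_symm_apply, LinearEquiv.ofLinear_apply]
    set a := (Quot.out e.1).1 with ha_def
    set b := (Quot.out e.1).2 with hb_def
    have hab : G.Adj a b := adj_of_mem_edgeFinset e.2
    have hmk : (s(a, b) : Sym2 V) = e.1 := by
      rw [ha_def, hb_def]; exact Quot.out_eq _
    have hadj' : G.Adj (σ⁻¹ a) (σ⁻¹ b) := by
      have := (hadj (σ⁻¹ a) (σ⁻¹ b))
      simp at this
      exact this.mpr hab
    have hmap : Sym2.map σ (s(σ⁻¹ a, σ⁻¹ b) : Sym2 V) = s(a, b) := by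
      rw [Sym2.map_pair_eq]
      simp
    show (funToChain G (Pi.single e 1)).1 (σ⁻¹ a) (σ⁻¹ b) = _
    show (if h : G.Adj (σ⁻¹ a) (σ⁻¹ b) then
      (if Quot.out (s(σ⁻¹ a, σ⁻¹ b) : Sym2 V) = (σ⁻¹ a, σ⁻¹ b) then (1:ℚ) else -1) *
        (Pi.single e 1 : ↥G.edgeFinset → ℚ) ⟨s(σ⁻¹ a, σ⁻¹ b), _⟩ else 0) = _
    rw [dif_pos hadj']
    by_cases hfix : Sym2.map σ e.1 = e.1
    · rw [if_pos hfix]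
      have h1 : (s(σ⁻¹ a, σ⁻¹ b) : Sym2 V) = e.1 := by
        have h2 := congrArg (Sym2.map ⇑σ⁻¹) hfix
        rw [Sym2.map_map] at h2
        have h3 : Sym2.map (⇑σ⁻¹ ∘ ⇑σ) e.1 = e.1 := by
          have : (⇑σ⁻¹ ∘ ⇑σ) = id := by funext z; simp
          rw [this, Sym2.map_id]; rfl
        have h4 : Sym2.map (⇑σ⁻¹) e.1 = e.1 := by rw [← h2, h3]
        calc (s(σ⁻¹ a, σ⁻¹ b) : Sym2 V) = Sym2.map (⇑σ⁻¹) s(a, b) := by rw [Sym2.map_pair_eq]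
        _ = Sym2.map (⇑σ⁻¹) e.1 := by rw [hmk]
        _ = e.1 := h4
      have hsab : (s(σ⁻¹ a, σ⁻¹ b) : Sym2 V) = s(a, b) := by rw [h1, hmk]
      rw [Sym2.eq_iff] at hsab
      have hfixed : σ⁻¹ a = a ∧ σ⁻¹ b = b := by
        rcases hsab with h | ⟨h1', h2'⟩
        · exact h
        · exfalso
          apply hnoinv a b hab
          constructor
          · rw [← h2']; simp
          · rw [← h1']; simp
      obtain ⟨hfa, hfb⟩ := hfixed
      have hcond : Quot.out (s(σ⁻¹ a, σ⁻¹ b) : Sym2 V) = (σ⁻¹ a, σ⁻¹ b) := by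
        rw [hfa, hfb, hmk, ha_def, hb_def, Prod.mk.eta]
      rw [if_pos hcond, one_mul]
      have hidx : (⟨s(σ⁻¹ a, σ⁻¹ b), by rw [h1]; exact e.2⟩ : ↥G.edgeFinset) = e :=
        Subtype.ext h1
      rw [hidx, Pi.single_eq_same]
    · rw [if_neg hfix]
      have hne : (⟨s(σ⁻¹ a, σ⁻¹ b), by
          simpa [SimpleGraph.mem_edgeFinset] using hadj'⟩ : ↥G.edgeFinset) ≠ e := by
        intro hc
        apply hfix
        have hc' : (s(σ⁻¹ a, σ⁻¹ b) : Sym2 V) = e.1 := congrArg Subtype.val hc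
        rw [← hc', hmap, hc']; exact hmk
      rw [Pi.single_eq_of_ne hne, mul_zero]
  rw [Finset.sum_congr rfl fun e _ => key e]
  rw [Finset.sum_coe_sort G.edgeFinset (fun e => if Sym2.map σ e = e then (1:ℚ) else 0),
    Finset.sum_boole]

def edgeChain (G : SimpleGraph V) {a b : V} (h : G.Adj a b) : chainSpace ℚ G :=
  ⟨fun u v => if u = a ∧ v = b then 1 else if u = b ∧ v = a then -1 else 0, by
    have hne : a ≠ b := h.ne
    constructor
    · intro u v
      dsimp only
      split_ifs
      all_goals try ring
      all_goals (exfalso; grind)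
    · intro u v hnadj
      dsimp only
      rw [if_neg (fun hc : u = a ∧ v = b => hnadj (hc.1 ▸ hc.2 ▸ h)),
        if_neg (fun hc : u = b ∧ v = a => hnadj (hc.1 ▸ hc.2 ▸ h.symm))]⟩

lemma boundary_edgeChain (G : SimpleGraph V) {a b : V} (h : G.Adj a b) :
    graphBoundary ℚ G (edgeChain G h) = Pi.single b 1 - Pi.single a 1 := by
  have hne : a ≠ b := h.ne
  funext v
  show (∑ u, (edgeChain G h).1 u v) = _
  have hval : ∀ u, (edgeChain G h).1 u v
      = (if v = b then (if u = a then (1:ℚ) else 0) else 0)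
        + (if v = a then (if u = b then (-1:ℚ) else 0) else 0) := by
    intro u
    show (if u = a ∧ v = b then (1:ℚ) else if u = b ∧ v = a then -1 else 0) = _
    by_cases h1 : u = a ∧ v = b
    · rw [if_pos h1, if_pos h1.2, if_pos h1.1,
        if_neg (fun hc : v = a => hne (h1.2 ▸ hc ▸ rfl))]
      ring
    · rw [if_neg h1]
      by_cases h2 : u = b ∧ v = a
      · rw [if_pos h2, if_pos h2.2, if_pos h2.1,
          if_neg (fun hc : v = b => hne (h2.2 ▸ hc ▸ rfl))]
        ring
      · have e1 : (if v = b then (if u = a then (1:ℚ) else 0) else 0) = 0 := by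
          by_cases hv : v = b
          · rw [if_pos hv, if_neg (fun hu => h1 ⟨hu, hv⟩)]
          · rw [if_neg hv]
        have e2 : (if v = a then (if u = b then (-1:ℚ) else 0) else 0) = 0 := by
          by_cases hv : v = a
          · rw [if_pos hv, if_neg (fun hu => h2 ⟨hu, hv⟩)]
          · rw [if_neg hv]
        rw [if_neg (fun hc => h2 hc), e1, e2]
        ring
  rw [Finset.sum_congr rfl fun u _ => hval u, Finset.sum_add_distrib]
  have s1 : (∑ u, if v = b then (if u = a then (1:ℚ) else 0) else 0)
      = if v = b then 1 else 0 := by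
    by_cases hv : v = b
    · simp [hv, Finset.sum_ite_eq']
    · simp [hv]
  have s2 : (∑ u, if v = a then (if u = b then (-1:ℚ) else 0) else 0)
      = if v = a then -1 else 0 := by
    by_cases hv : v = a
    · simp [hv, Finset.sum_ite_eq']
    · simp [hv]
  rw [s1, s2]
  have hr : (Pi.single b 1 - Pi.single a 1 : V → ℚ) v
      = (if v = b then (1:ℚ) else 0) - (if v = a then 1 else 0) := by
    simp [Pi.single_apply]
  rw [hr]
  by_cases hb : v = b <;> by_cases ha : v = a
  · exact absurd (ha.symm.trans hb) hne
  all_goals simp [ha, hb, hne, Ne.symm hne]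

lemma single_sub_mem_range (G : SimpleGraph V) (hconn : G.Connected) (u v : V) :
    (Pi.single v 1 - Pi.single u 1 : V → ℚ) ∈ LinearMap.range (graphBoundary ℚ G) := by
  have hreach : G.Reachable u v := hconn u v
  obtain ⟨w⟩ := hreach
  induction w with
  | nil => simp
  | @cons a c v' hac p ih =>
      have h1 : (Pi.single v' 1 - Pi.single c 1 : V → ℚ)
          ∈ LinearMap.range (graphBoundary ℚ G) := ih
      have h2 : (Pi.single c 1 - Pi.single a 1 : V → ℚ)
          ∈ LinearMap.range (graphBoundary ℚ G) :=
        ⟨edgeChain G hac, boundary_edgeChain G hac⟩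
      have := Submodule.add_mem _ h1 h2
      simpa using this


/-- Let `Γ` be a finite connected simple graph of genus `g = |E| - |V| + 1`, and let
`f` be a graph automorphism of `Γ` acting without inversions (no edge is mapped to
itself with its endpoints exchanged) and inducing the identity on `H₁(Γ;ℚ) = ker ∂`.
Then the fixed-point subgraph `Fix(f)` satisfies `χ(Fix(f)) = 1 - g = χ(Γ)`. -/
theorem eulerChar_fixed_subgraph {V : Type*} [Fintype V] [DecidableEq V]
    (G : SimpleGraph V) [DecidableRel G.Adj]
    (hconn : G.Connected)
    (g : ℕ) (hg : (g : ℤ) = (G.edgeFinset.card : ℤ) - (Fintype.card V : ℤ) + 1)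
    (σ : Equiv.Perm V)
    (hadj : ∀ u v : V, G.Adj u v ↔ G.Adj (σ u) (σ v))
    (hnoinv : ∀ u v : V, G.Adj u v → ¬ (σ u = v ∧ σ v = u))
    (hH1 : ∀ c ∈ LinearMap.ker (graphBoundary ℚ G),
      (fun u v => c.1 (σ⁻¹ u) (σ⁻¹ v)) = c.1) :
    ((Finset.univ.filter fun v : V => σ v = v).card : ℤ)
        - ((G.edgeFinset.filter fun e => Sym2.map σ e = e).card : ℤ)
      = 1 - (g : ℤ) := by
  classical
  set T0 := vertAct σ with hT0
  set T1 := chainAct G σ hadj with hT1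
  set bd := graphBoundary ℚ G with hbd
  set W := LinearMap.range bd with hW
  set A : chainSpace ℚ G →ₗ[ℚ] chainSpace ℚ G := T1 - LinearMap.id with hA
  set L : (V → ℚ) →ₗ[ℚ] (V → ℚ) := T0 - LinearMap.id with hL
  -- commutation
  have hcomm : ∀ c : chainSpace ℚ G, bd (T1 c) = T0 (bd c) := by
    intro c
    funext v
    show (∑ u, c.1 (σ⁻¹ u) (σ⁻¹ v)) = (∑ u, c.1 u (σ⁻¹ v))
    exact Equiv.sum_comp σ⁻¹ (fun u => c.1 u (σ⁻¹ v))
  -- A kills ker bd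
  have hAker : LinearMap.ker bd ≤ LinearMap.ker A := by
    intro c hc
    rw [LinearMap.mem_ker, hA, LinearMap.sub_apply, LinearMap.id_apply, sub_eq_zero]
    exact Subtype.ext (hH1 c hc)
  -- L maps into W
  have hLmem : ∀ c : V → ℚ, L c ∈ W := by
    have hsingle : ∀ v : V, L (Pi.single v 1) ∈ W := by
      intro v
      have h0 : T0 (Pi.single v (1:ℚ)) = Pi.single (σ v) 1 := by
        funext u
        show (Pi.single v (1:ℚ) : V → ℚ) (σ⁻¹ u) = (Pi.single (σ v) (1:ℚ) : V → ℚ) u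
        rw [Pi.single_apply, Pi.single_apply]
        congr 1
        simp only [eq_iff_iff]
        constructor
        · intro h; rw [← h]; simp
        · intro h; rw [h]; simp
      rw [hL, LinearMap.sub_apply, LinearMap.id_apply, h0]
      exact single_sub_mem_range G hconn v (σ v)
    intro c
    have hc : c = ∑ v, (c v) • (Pi.single v (1:ℚ) : V → ℚ) := by
      rw [← Finset.univ_sum_single c]
      refine Finset.sum_congr rfl fun v _ => ?_
      rw [← Pi.single_smul, smul_eq_mul, mul_one]
      simp
    rw [hc, map_sum]
    refine Submodule.sum_mem _ fun v _ => ?_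
    rw [map_smul]
    exact Submodule.smul_mem _ _ (hsingle v)
  set B' : (V → ℚ) →ₗ[ℚ] W := LinearMap.codRestrict W L hLmem with hB'
  -- Abar
  set Abar : W →ₗ[ℚ] chainSpace ℚ G :=
    (Submodule.liftQ (LinearMap.ker bd) A hAker).comp
      (bd.quotKerEquivRange.symm : W →ₗ[ℚ] (chainSpace ℚ G ⧸ LinearMap.ker bd)) with hAbar
  have hfact1 : ∀ c, Abar (bd.rangeRestrict c) = A c := by
    intro c
    have hq : (bd.quotKerEquivRange).symm (bd.rangeRestrict c) = Submodule.Quotient.mk c := by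
      apply (bd.quotKerEquivRange).injective
      rw [LinearEquiv.apply_symm_apply]
      apply Subtype.ext
      rw [LinearMap.quotKerEquivRange_apply_mk]
      rfl
    rw [hAbar, LinearMap.comp_apply]
    show (Submodule.liftQ (LinearMap.ker bd) A hAker)
      ((bd.quotKerEquivRange).symm (bd.rangeRestrict c)) = A c
    rw [hq, Submodule.liftQ_apply]
  have hAeq : Abar ∘ₗ bd.rangeRestrict = A := LinearMap.ext hfact1
  have hfact2 : bd.rangeRestrict ∘ₗ Abar = B' ∘ₗ W.subtype := by
    apply LinearMap.ext; intro w
    obtain ⟨c, rfl⟩ := bd.surjective_rangeRestrict w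
    rw [LinearMap.comp_apply, hfact1, LinearMap.comp_apply]
    apply Subtype.ext
    show bd (A c) = L ((W.subtype) (bd.rangeRestrict c))
    have hcoe : (W.subtype) (bd.rangeRestrict c) = bd c := rfl
    rw [hcoe, hA, hL, LinearMap.sub_apply, LinearMap.sub_apply, LinearMap.id_apply,
      LinearMap.id_apply, map_sub, hcomm c]
  -- traces
  have htrA : LinearMap.trace ℚ _ A = LinearMap.trace ℚ _ (B' ∘ₗ W.subtype) := by
    rw [← hAeq, LinearMap.trace_comp_comm', hfact2]
  have htrL : LinearMap.trace ℚ _ L = LinearMap.trace ℚ _ (B' ∘ₗ W.subtype) := by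
    conv_lhs => rw [← LinearMap.subtype_comp_codRestrict L W hLmem]
    rw [LinearMap.trace_comp_comm']
  have hmain : LinearMap.trace ℚ _ A = LinearMap.trace ℚ _ L := by rw [htrA, htrL]
  have hsplit : LinearMap.trace ℚ (chainSpace ℚ G) (T1 - LinearMap.id)
      = LinearMap.trace ℚ _ T1 - LinearMap.trace ℚ _ (LinearMap.id) := (LinearMap.trace ℚ (chainSpace ℚ G)).map_sub T1 LinearMap.id
  rw [hA, hL] at hmain
  simp only [map_sub, LinearMap.trace_id] at hmain
  rw [hsplit, LinearMap.trace_id] at hmain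
  rw [hT0] at hmain
  rw [trace_vertAct σ] at hmain
  rw [hT1, trace_chainAct G σ hadj hnoinv] at hmain
  rw [finrank_chainSpace G, Module.finrank_fintype_fun_eq_card ℚ] at hmain
  -- conclude
  have hZ : ((G.edgeFinset.filter fun e => Sym2.map σ e = e).card : ℤ)
      - (G.edgeFinset.card : ℤ)
      = ((Finset.univ.filter fun v : V => σ v = v).card : ℤ) - (Fintype.card V : ℤ) := by
    exact_mod_cast hmain
  rw [hg]
  linarith
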